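/- Let F be a free left R-module and f an endomorphism of F lying in the Jacobson radical of End(F). Then the family {π_λ(Im f)}_{λ∈Λ} of left ideals of R (where π_λ are coordinate projections) is left vanishing: for any sequence a_1, a_2, ... with a_i ∈ π_{λ_i}(Im f) and pairwise distinct indices λ_i, there exists n with a_1 a_2 ⋯ a_n = 0. -/

import Mathlib

/-- A submodule `N` of `M` is small (superfluous) in `M`. -/
def IsSmallSubmodule {R M : Type*} [Ring R] [AddCommGroup M] [Module R M]
    (N : Submodule R M) : Prop :=
  ∀ K : Submodule R M, N ⊔ K = ⊤ → K = ⊤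

/-- `L` is a weak supplement of `N` in `M`. -/
def IsWeakSupplement {R M : Type*} [Ring R] [AddCommGroup M] [Module R M]
    (L N : Submodule R M) : Prop :=
  N ⊔ L = ⊤ ∧ IsSmallSubmodule (N ⊓ L)

/-- A module is weakly supplemented if every submodule has a weak supplement. -/
def IsWeaklySupplemented (R M : Type*) [Ring R] [AddCommGroup M] [Module R M] : Prop :=
  ∀ N : Submodule R M, ∃ L : Submodule R M, IsWeakSupplement L N

/-- A left ideal is left t-nilpotent if every sequence in it has a vanishing
initial left product `a 0 * a 1 * ⋯ * a (n-1) = 0`. -/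
def IsLeftTNilpotent {R : Type*} [Ring R] (I : Ideal R) : Prop :=
  ∀ a : ℕ → R, (∀ i, a i ∈ I) → ∃ n : ℕ, ((List.range n).map a).prod = 0

/-- A ring is semilocal if it is semisimple modulo its Jacobson radical. -/
def IsSemilocalRing (R : Type*) [Ring R] : Prop :=
  IsSemisimpleModule R (R ⧸ (⊥ : Ideal R).jacobson)

/-- A ring is left perfect iff it is semilocal with left t-nilpotent Jacobson radical. -/
def IsLeftPerfectRing (R : Type*) [Ring R] : Prop :=
  IsSemilocalRing R ∧ IsLeftTNilpotent (⊥ : Ideal R).jacobson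

section RingHelpers
variable {S : Type*} [Ring S]

lemma wz_isUnit_one_add_swap {a b : S} (h : IsUnit (1 + a * b)) : IsUnit (1 + b * a) := by
  obtain ⟨u, hu⟩ := h
  have h1 : (1 + a * b) * ↑u⁻¹ = 1 := by rw [← hu]; exact u.mul_inv
  have h2 : (↑u⁻¹ : S) * (1 + a * b) = 1 := by rw [← hu]; exact u.inv_mul
  refine isUnit_iff_exists.mpr ⟨1 - b * ↑u⁻¹ * a, ?_, ?_⟩
  · have e1 : (1 + b * a) * (1 - b * ↑u⁻¹ * a)
        = 1 + b * a - b * ((1 + a * b) * ↑u⁻¹) * a := by noncomm_ring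
    rw [h1] at e1; rw [e1]; noncomm_ring
  · have e2 : (1 - b * ↑u⁻¹ * a) * (1 + b * a)
        = 1 + b * a - b * (↑u⁻¹ * (1 + a * b)) * a := by noncomm_ring
    rw [h2] at e2; rw [e2]; noncomm_ring

lemma wz_jac_unit_left {x : S} (hx : x ∈ (⊥ : Ideal S).jacobson) (y : S) :
    IsUnit (1 + y * x) := by
  have key : ∀ z : S, ∃ w : S, w * (1 + z * x) = 1 := by
    intro z
    by_contra hcon
    push_neg at hcon
    have h1 : (1 : S) ∉ Ideal.span {1 + z * x} := by
      intro h
      obtain ⟨r, hr⟩ := Submodule.mem_span_singleton.mp h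
      exact hcon r (by rwa [smul_eq_mul] at hr)
    have hne : Ideal.span {1 + z * x} ≠ ⊤ := fun h => h1 (h ▸ Submodule.mem_top)
    obtain ⟨M, hM, hle⟩ := Ideal.exists_le_maximal _ hne
    have hxM : x ∈ M := Ideal.mem_sInf.mp hx ⟨bot_le, hM⟩
    have hzx : z * x ∈ M := M.smul_mem z hxM
    have h1M : (1 + z * x) ∈ M := hle (Ideal.subset_span (Set.mem_singleton _))
    have hone : (1 : S) ∈ M := by
      have := M.sub_mem h1M hzx; simpa using this
    exact hM.ne_top ((Ideal.eq_top_iff_one M).mpr hone)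
  obtain ⟨w, hw⟩ := key y
  have hwform : w = 1 + (-(w * y)) * x := by
    have hsum : w + w * (y * x) = 1 := by rw [← hw]; noncomm_ring
    rw [← hsum]; noncomm_ring
  obtain ⟨w₂, hw₂⟩ := key (-(w * y))
  rw [← hwform] at hw₂
  have e : w₂ = 1 + y * x := by
    calc w₂ = w₂ * (w * (1 + y * x)) := by rw [hw]; rw [mul_one]
      _ = (w₂ * w) * (1 + y * x) := by rw [mul_assoc]
      _ = 1 + y * x := by rw [hw₂, one_mul]
  have hinv : (1 + y * x) * w = 1 := by rw [← e, hw₂]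
  exact isUnit_iff_exists.mpr ⟨w, hinv, hw⟩

lemma wz_jac_unit_right {x : S} (hx : x ∈ (⊥ : Ideal S).jacobson) (y : S) :
    IsUnit (1 + x * y) :=
  wz_isUnit_one_add_swap (wz_jac_unit_left hx y)

end RingHelpers

section BP
variable {R : Type*} [Ring R]

/-- product of `a` over `[i, i+n)` -/
def wzbp (a : ℕ → R) : ℕ → ℕ → R
  | _, 0 => 1
  | i, n+1 => wzbp a i n * a (i + n)

lemma wzbp_add (a : ℕ → R) (i m : ℕ) : ∀ k, wzbp a i (m + k) = wzbp a i m * wzbp a (i + m) k := by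
  intro k
  induction k with
  | zero => simp [wzbp]
  | succ k ih =>
      show wzbp a i ((m + k) + 1) = _
      rw [wzbp, ih, wzbp, mul_assoc, Nat.add_assoc]

lemma wz_range_prod (a : ℕ → R) (n : ℕ) : ((List.range n).map a).prod = wzbp a 0 n := by
  induction n with
  | zero => simp [wzbp]
  | succ n ih =>
      rw [List.range_succ, List.map_append, List.prod_append, ih]
      simp [wzbp]

end BP

section Small
variable {R : Type*} [Ring R] {Λ : Type*}

/-- The image of `f ∈ Jac(End F)` is small in `F`. -/
lemma wz_small (f : Module.End R (Λ →₀ R))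
    (hf : f ∈ (⊥ : Ideal (Module.End R (Λ →₀ R))).jacobson)
    (K : Submodule R (Λ →₀ R)) (hK : K ⊔ LinearMap.range f = ⊤) : K = ⊤ := by
  have hex : ∀ l : Λ, ∃ y, Finsupp.single l 1 - f y ∈ K := by
    intro l
    have hm : Finsupp.single l 1 ∈ K ⊔ LinearMap.range f := hK ▸ Submodule.mem_top
    obtain ⟨k, hk, v, hv, hkv⟩ := Submodule.mem_sup.mp hm
    obtain ⟨y, hy⟩ := hv
    refine ⟨y, ?_⟩
    have : Finsupp.single l 1 - f y = k := by rw [← hkv, hy]; abel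
    rwa [this]
  choose y hy using hex
  set g : Module.End R (Λ →₀ R) := Finsupp.linearCombination R y with hg
  set W : Module.End R (Λ →₀ R) := 1 + f * (-g) with hWdef
  have hWunit : IsUnit W := wz_jac_unit_right hf (-g)
  have hWK : ∀ v, W v ∈ K := by
    intro v
    induction v using Finsupp.induction with
    | zero => rw [map_zero]; exact K.zero_mem
    | single_add l b v' _ _ ih =>
        rw [map_add]
        refine K.add_mem ?_ ih
        have hsingle : W (Finsupp.single l b) = b • (Finsupp.single l 1 - f (y l)) := by
          have h1 : W (Finsupp.single l b) = Finsupp.single l b - f (g (Finsupp.single l b)) := by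
            simp [hWdef, Module.End.mul_apply, sub_eq_add_neg]
          have h2 : g (Finsupp.single l b) = b • y l := by
            simp [hg, Finsupp.linearCombination_single]
          rw [h1, h2, map_smul, smul_sub, Finsupp.smul_single, smul_eq_mul, mul_one]
        rw [hsingle]
        exact K.smul_mem b (hy l)
  rw [eq_top_iff]
  intro v _
  obtain ⟨u, hu⟩ := hWunit
  have : W ((↑u⁻¹ : Module.End R (Λ →₀ R)) v) = v := by
    have h1 : W * ↑u⁻¹ = 1 := by rw [← hu]; exact u.mul_inv
    calc W ((↑u⁻¹ : Module.End R (Λ →₀ R)) v) = (W * ↑u⁻¹) v := (Module.End.mul_apply _ _ _).symm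
      _ = v := by rw [h1]; rfl
  exact this ▸ hWK _

/-- Corner lemma: coordinates of elements of `Im f` are "radical-like". -/
lemma wz_corner (f : Module.End R (Λ →₀ R))
    (hf : f ∈ (⊥ : Ideal (Module.End R (Λ →₀ R))).jacobson)
    (z : Λ →₀ R) (μ : Λ) : IsUnit (1 + (f z) μ) := by
  set r : R := (f z) μ with hr
  set e : Module.End R (Λ →₀ R) :=
    (LinearMap.toSpanSingleton R (Λ →₀ R) (Finsupp.single μ 1)).comp (Finsupp.lapply μ) with he
  set α : Module.End R (Λ →₀ R) :=
    (LinearMap.toSpanSingleton R (Λ →₀ R) z).comp (Finsupp.lapply μ) with hα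
  have h1 : IsUnit (1 + (α * e) * f) := wz_jac_unit_left hf (α * e)
  have h2 : IsUnit (1 + (e * f) * α) := by
    have : IsUnit (1 + α * (e * f)) := by
      have hassoc : α * (e * f) = (α * e) * f := (mul_assoc α e f).symm
      rw [hassoc]; exact h1
    exact wz_isUnit_one_add_swap (a := α) (b := e * f) this
  have happ : ∀ v : Λ →₀ R, (e * f * α) v = (v μ * r) • Finsupp.single μ 1 := by
    intro v
    have : (e * f * α) v = e (f (α v)) := by rw [Module.End.mul_apply, Module.End.mul_apply]
    rw [this]
    have hαv : α v = (v μ) • z := by simp [hα]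
    rw [hαv, map_smul]
    simp only [he, LinearMap.coe_comp, Function.comp_apply, Finsupp.lapply_apply,
      LinearMap.toSpanSingleton_apply, Finsupp.smul_apply, smul_eq_mul, ← hr, smul_smul]
  obtain ⟨u, hu⟩ := h2
  set V : Module.End R (Λ →₀ R) := ↑u⁻¹ with hV
  set t : R := (V (Finsupp.single μ 1)) μ with ht
  have hVl : (1 + e * f * α) * V = 1 := by rw [← hu]; exact u.mul_inv
  have hVr : V * (1 + e * f * α) = 1 := by rw [← hu]; exact u.inv_mul
  refine isUnit_iff_exists.mpr ⟨t, ?_, ?_⟩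
  · -- (1+r)*t = 1 : apply V to (1+ρ)(single μ 1) = (1+r) • single μ 1
    have h3 : (1 + e * f * α) (Finsupp.single μ 1) = (1 + r) • Finsupp.single μ 1 := by
      rw [LinearMap.add_apply, Module.End.one_apply, happ]
      rw [Finsupp.single_eq_same, one_mul, add_smul, one_smul]
    have h4 : V ((1 + e * f * α) (Finsupp.single μ 1)) = Finsupp.single μ 1 := by
      calc V ((1 + e * f * α) (Finsupp.single μ 1))
          = (V * (1 + e * f * α)) (Finsupp.single μ 1) := (Module.End.mul_apply _ _ _).symm
        _ = Finsupp.single μ 1 := by rw [hVr]; rfl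
    rw [h3, map_smul] at h4
    have := congrArg (fun w : Λ →₀ R => w μ) h4
    simpa [Finsupp.smul_apply, smul_eq_mul, ← ht] using this
  · -- t*(1+r) = 1 : apply (1+ρ) to V (single μ 1)
    have h5 : (1 + e * f * α) (V (Finsupp.single μ 1)) = Finsupp.single μ 1 := by
      calc (1 + e * f * α) (V (Finsupp.single μ 1))
          = ((1 + e * f * α) * V) (Finsupp.single μ 1) := (Module.End.mul_apply _ _ _).symm
        _ = Finsupp.single μ 1 := by rw [hVl]; rfl
    rw [LinearMap.add_apply, Module.End.one_apply, happ] at h5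
    have := congrArg (fun w : Λ →₀ R => w μ) h5
    simp only [Finsupp.add_apply, Finsupp.smul_apply, Finsupp.single_eq_same, smul_eq_mul,
      mul_one, ← ht] at this
    calc t * (1 + r) = t + t * r := by noncomm_ring
      _ = 1 := this
end Small

section Constr
variable {R : Type*} [Ring R] {Λ : Type*}
variable (f : Module.End R (Λ →₀ R)) (lam : ℕ → Λ) (a : ℕ → R) (x : ℕ → Λ →₀ R)

/-- the element whose `f`-image yields the block product over `(m₁, m₂]`. -/
noncomputable def wzw (m₁ m₂ : ℕ) : Λ →₀ R := wzbp a (m₁ + 1) (m₂ - 1 - m₁) • x m₂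

/-- upper bound for indices whose basis vector meets the support of `f (wzw m₁ m₂)`. -/
noncomputable def wzbnd (m₁ m₂ : ℕ) : ℕ :=
  sSup {m : ℕ | lam m ∈ (f (wzw a x m₁ m₂)).support}

noncomputable def wzsq : ℕ → ℕ × ℕ
  | 0 => (0, 1)
  | k+1 => ((wzsq k).2, max (wzsq k).2 (wzbnd f lam a x (wzsq k).1 (wzsq k).2) + 1)

noncomputable def wzn (k : ℕ) : ℕ := (wzsq f lam a x k).1

lemma wzn_zero : wzn f lam a x 0 = 0 := rfl

lemma wzsq_fst_lt_snd (k : ℕ) : (wzsq f lam a x k).1 < (wzsq f lam a x k).2 := by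
  induction k with
  | zero => exact Nat.zero_lt_one
  | succ k _ =>
      show (wzsq f lam a x k).2 < max (wzsq f lam a x k).2 _ + 1
      exact Nat.lt_succ_of_le (le_max_left _ _)

lemma wzn_succ (k : ℕ) : wzn f lam a x (k+1) = (wzsq f lam a x k).2 := rfl

lemma wzn_lt_succ (k : ℕ) : wzn f lam a x k < wzn f lam a x (k+1) :=
  wzsq_fst_lt_snd f lam a x k

lemma wzn_strictMono : StrictMono (wzn f lam a x) :=
  strictMono_nat_of_lt_succ (wzn_lt_succ f lam a x)

lemma wzn_succ_succ (k : ℕ) :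
    wzn f lam a x (k+2)
      = max (wzn f lam a x (k+1)) (wzbnd f lam a x (wzn f lam a x k) (wzn f lam a x (k+1))) + 1 :=
  rfl

lemma wz_dodge (hlam : Function.Injective lam) (k j : ℕ) (hj : k + 2 ≤ j) :
    f (wzw a x (wzn f lam a x k) (wzn f lam a x (k+1))) (lam (wzn f lam a x j)) = 0 := by
  set S : Set ℕ := {m : ℕ | lam m ∈ (f (wzw a x (wzn f lam a x k) (wzn f lam a x (k+1)))).support}
    with hS
  have hSfin : S.Finite := by
    have : S = lam ⁻¹' ((f (wzw a x (wzn f lam a x k) (wzn f lam a x (k+1)))).support : Set Λ) := rfl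
    rw [this]
    exact Set.Finite.preimage (Function.Injective.injOn hlam) (Finset.finite_toSet _)
  by_contra hne
  have hmem : wzn f lam a x j ∈ S := by
    rw [hS]
    exact Finsupp.mem_support_iff.mpr hne
  have hle : wzn f lam a x j ≤ wzbnd f lam a x (wzn f lam a x k) (wzn f lam a x (k+1)) :=
    le_csSup hSfin.bddAbove hmem
  have hgt : wzbnd f lam a x (wzn f lam a x k) (wzn f lam a x (k+1)) < wzn f lam a x j := by
    have h1 : wzn f lam a x (k+2) ≤ wzn f lam a x j := (wzn_strictMono f lam a x).monotone hj
    have h2 : wzbnd f lam a x (wzn f lam a x k) (wzn f lam a x (k+1)) < wzn f lam a x (k+2) := by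
      rw [wzn_succ_succ]
      exact Nat.lt_succ_of_le (le_max_right _ _)
    omega
  omega

lemma wz_block (hax : ∀ i, f (x i) (lam i) = a i) (k : ℕ) :
    f (wzw a x (wzn f lam a x k) (wzn f lam a x (k+1))) (lam (wzn f lam a x (k+1)))
      = wzbp a (wzn f lam a x k + 1) (wzn f lam a x (k+1) - wzn f lam a x k) := by
  set s := wzn f lam a x k
  set t := wzn f lam a x (k+1)
  have hst : s < t := wzn_lt_succ f lam a x k
  have h1 : f (wzw a x s t) (lam t) = wzbp a (s+1) (t - 1 - s) * a t := by
    rw [wzw, map_smul, Finsupp.smul_apply, smul_eq_mul, hax t]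
  rw [h1]
  have h2 : t - s = (t - 1 - s) + 1 := by omega
  rw [h2, wzbp]
  congr 2
  omega

end Constr

theorem wz_master {R : Type*} [Ring R] {Λ : Type*}
    (f : Module.End R (Λ →₀ R))
    (hf : f ∈ (⊥ : Ideal (Module.End R (Λ →₀ R))).jacobson)
    (lam : ℕ → Λ) (hlam : Function.Injective lam)
    (a : ℕ → R) (x : ℕ → Λ →₀ R)
    (hax : ∀ i, f (x i) (lam i) = a i) :
    ∃ n : ℕ, ((List.range n).map a).prod = 0 := by
  classical
  set n : ℕ → ℕ := wzn f lam a x with hn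
  set w : ℕ → Λ →₀ R := fun k => wzw a x (n k) (n (k+1)) with hw
  set d : ℕ → ℕ → R := fun k j => f (w k) (lam (n j)) with hd
  set p : ℕ → Λ := fun k => lam (n k) with hp
  have hpinj : Function.Injective p :=
    hlam.comp (wzn_strictMono f lam a x).injective
  set gen : ℕ → (Λ →₀ R) := fun k =>
    Finsupp.single (p k) 1 + (∑ j ∈ Finset.range (k+1), d k j • Finsupp.single (p j) 1)
      - f (w k) with hgen
  set Koff : Set (Λ →₀ R) := (fun l => Finsupp.single l (1:R)) '' (Set.range p)ᶜ with hKoff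
  set K : Submodule R (Λ →₀ R) := Submodule.span R (Koff ∪ Set.range gen) with hKdef
  -- Step A : K ⊔ range f = ⊤
  have hpath : ∀ k, Finsupp.single (p k) 1 ∈ K ⊔ LinearMap.range f := by
    intro k
    induction k using Nat.strong_induction_on with
    | _ k ih =>
      have hg : gen k ∈ K ⊔ LinearMap.range f :=
        Submodule.mem_sup_left (Submodule.subset_span (Or.inr ⟨k, rfl⟩))
      have hfw : f (w k) ∈ K ⊔ LinearMap.range f :=
        Submodule.mem_sup_right (LinearMap.mem_range_self f (w k))
      have hsum : (∑ j ∈ Finset.range k, d k j • Finsupp.single (p j) 1)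
          ∈ K ⊔ LinearMap.range f := by
        refine Submodule.sum_mem _ fun j hj => Submodule.smul_mem _ _ ?_
        exact ih j (Finset.mem_range.mp hj)
      have key : (1 + d k k) • Finsupp.single (p k) (1:R)
          = gen k + f (w k) - ∑ j ∈ Finset.range k, d k j • Finsupp.single (p j) (1:R) := by
        have h1 : gen k + f (w k)
            = Finsupp.single (p k) (1:R) + ∑ j ∈ Finset.range (k+1), d k j • Finsupp.single (p j) (1:R) := by
          rw [hgen]; exact sub_add_cancel _ _
        rw [h1, Finset.sum_range_succ, add_smul, one_smul]
        abel
      have hmem : (1 + d k k) • Finsupp.single (p k) (1:R) ∈ K ⊔ LinearMap.range f := by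
        rw [key]; exact Submodule.sub_mem _ (Submodule.add_mem _ hg hfw) hsum
      have hunit : IsUnit (1 + d k k) := by
        have := wz_corner f hf (w k) (lam (n k))
        simpa [hd] using this
      obtain ⟨u, hu⟩ := hunit
      have : Finsupp.single (p k) (1:R) = (↑u⁻¹ : R) • ((1 + d k k) • Finsupp.single (p k) (1:R)) := by
        rw [smul_smul, ← hu, u.inv_mul, one_smul]
      rw [this]
      exact Submodule.smul_mem _ _ hmem
  have htop : K ⊔ LinearMap.range f = ⊤ := by
    rw [eq_top_iff]
    intro v _
    induction v using Finsupp.induction with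
    | zero => exact Submodule.zero_mem _
    | single_add l b v' _ _ ihv =>
      refine Submodule.add_mem _ ?_ (ihv Submodule.mem_top)
      have hsingle : Finsupp.single l b = b • Finsupp.single l (1:R) := by
        rw [Finsupp.smul_single, smul_eq_mul, mul_one]
      rw [hsingle]
      refine Submodule.smul_mem _ _ ?_
      by_cases hl : l ∈ Set.range p
      · obtain ⟨k, rfl⟩ := hl
        exact hpath k
      · exact Submodule.mem_sup_left (Submodule.subset_span (Or.inl ⟨l, hl, rfl⟩))
  have hKtop : K = ⊤ := wz_small f hf K htop
  -- Step B : representation of e_{p 0}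
  have hmem0 : Finsupp.single (p 0) 1 ∈ Submodule.span R Koff ⊔ Submodule.span R (Set.range gen) := by
    rw [← Submodule.span_union, ← hKdef, hKtop]
    exact Submodule.mem_top
  obtain ⟨uu, huu, vv, hvv, huv⟩ := Submodule.mem_sup.mp hmem0
  obtain ⟨c, hc⟩ := Finsupp.mem_span_range_iff_exists_finsupp.mp hvv
  -- off-path part vanishes on path coordinates
  have hoff : ∀ m, uu (p m) = 0 := by
    have hZ : Submodule.span R Koff ≤
        { carrier := {v : Λ →₀ R | ∀ m, v (p m) = 0}
          add_mem' := by intro v₁ v₂ h1 h2 m; simp [Finsupp.add_apply, h1 m, h2 m]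
          zero_mem' := by intro m; simp
          smul_mem' := by intro r v hv m; simp [Finsupp.smul_apply, hv m] } := by
      rw [Submodule.span_le]
      rintro _ ⟨l, hl, rfl⟩ m
      exact Finsupp.single_eq_of_ne (fun h => hl ⟨m, h⟩)
    exact hZ huu
  -- evaluation of generators at path coordinates
  have hgeval : ∀ k m, gen k (p m)
      = (if k = m then 1 else 0) - (if k + 1 = m then d k (k+1) else 0) := by
    intro k m
    have hsingles : ∀ j, (Finsupp.single (p j) (1:R)) (p m) = if j = m then 1 else 0 := by
      intro j
      rw [Finsupp.single_apply]
      exact if_congr ⟨fun h => hpinj h, fun h => h ▸ rfl⟩ rfl rfl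
    have h1 : gen k (p m)
        = (if k = m then 1 else 0)
          + (∑ j ∈ Finset.range (k+1), if j = m then d k j else 0) - d k m := by
      rw [hgen]
      simp only [Finsupp.sub_apply, Finsupp.add_apply, Finsupp.finset_sum_apply,
        Finsupp.smul_apply, smul_eq_mul]
      rw [hsingles k]
      congr 1
      congr 1
      refine Finset.sum_congr rfl fun j _ => ?_
      rw [hsingles j, mul_ite, mul_one, mul_zero]
    rw [h1, Finset.sum_ite_eq' (Finset.range (k+1)) m (fun j => d k j)]
    by_cases hmk : m ≤ k
    · have hmem : m ∈ Finset.range (k+1) := Finset.mem_range.mpr (by omega)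
      rw [if_pos hmem, if_neg (show ¬ (k + 1 = m) by omega)]
      abel
    · have hnmem : m ∉ Finset.range (k+1) := by
        rw [Finset.mem_range]; omega
      rw [if_neg hnmem, if_neg (by omega : ¬ k = m)]
      by_cases hm1 : k + 1 = m
      · rw [if_pos hm1]
        have : d k m = d k (k+1) := by rw [hm1]
        rw [this]; abel
      · rw [if_neg hm1]
        have hz : d k m = 0 := by
          rw [hd]
          exact wz_dodge f lam a x hlam k m (by omega)
        rw [hz]; abel
  -- the master equations
  have hEq : ∀ m, (if m = 0 then (1:R) else 0)
      = c m - (if m = 0 then 0 else c (m-1) * d (m-1) m) := by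
    intro m
    have hL : (Finsupp.single (p 0) (1:R)) (p m) = if m = 0 then 1 else 0 := by
      rw [Finsupp.single_apply]
      exact if_congr ⟨fun h => (hpinj h).symm, fun h => by rw [h]⟩ rfl rfl
    have h0 : uu (p m) + vv (p m) = (Finsupp.single (p 0) (1:R)) (p m) := by
      rw [← Finsupp.add_apply, huv]
    rw [hoff m, zero_add, hL] at h0
    have hvveval : vv (p m) = c m - (if m = 0 then 0 else c (m-1) * d (m-1) m) := by
      rw [← hc, Finsupp.sum]
      rw [Finsupp.finset_sum_apply]
      have hterm : ∀ k ∈ c.support, (c k • gen k) (p m)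
          = (if k = m then c k else 0) - (if k + 1 = m then c k * d k (k+1) else 0) := by
        intro k _
        rw [Finsupp.smul_apply, hgeval k m, smul_eq_mul, mul_sub]
        congr 1
        · rw [mul_ite, mul_one, mul_zero]
        · rw [mul_ite, mul_zero]
      rw [Finset.sum_congr rfl hterm, Finset.sum_sub_distrib]
      congr 1
      · rw [Finset.sum_ite_eq' c.support m (fun k => c k)]
        by_cases hm : m ∈ c.support
        · rw [if_pos hm]
        · rw [if_neg hm, (Finsupp.notMem_support_iff.mp hm)]
      · rcases m with _ | m'
        · simp
        · have hcongr : ∀ k, (if k + 1 = m' + 1 then c k * d k (k+1) else 0)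
              = (if k = m' then c k * d k (m'+1) else 0) := by
            intro k
            by_cases hk : k = m'
            · subst hk; rw [if_pos rfl, if_pos rfl]
            · rw [if_neg (by omega), if_neg hk]
          rw [Finset.sum_congr rfl (fun k _ => hcongr k),
            Finset.sum_ite_eq' c.support m' (fun k => c k * d k (m'+1))]
          simp only [Nat.add_sub_cancel]
          rw [if_neg (by omega : ¬ m' + 1 = 0)]
          by_cases hm : m' ∈ c.support
          · rw [if_pos hm]
          · rw [if_neg hm, (Finsupp.notMem_support_iff.mp hm), zero_mul]
    rw [← h0, hvveval]
  -- solve the recursion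
  have hcval : ∀ m, c m = wzbp a 1 (n m) := by
    intro m
    induction m with
    | zero =>
        have h : (1:R) = c 0 := by simpa using hEq 0
        have hn0 : n 0 = 0 := rfl
        rw [← h, hn0]
        rfl
    | succ m' ih =>
        have h := hEq (m' + 1)
        rw [if_neg (by omega : ¬ m' + 1 = 0), if_neg (by omega : ¬ m' + 1 = 0),
          Nat.add_sub_cancel] at h
        have h2 : c (m' + 1) = c m' * d m' (m'+1) := sub_eq_zero.mp h.symm
        have h3 : d m' (m'+1) = wzbp a (n m' + 1) (n (m'+1) - n m') := by
          rw [hd]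
          exact wz_block f lam a x hax m'
        rw [h2, h3, ih]
        have h4 : wzbp a 1 (n m') * wzbp a (1 + n m') (n (m'+1) - n m')
            = wzbp a 1 (n m' + (n (m'+1) - n m')) := (wzbp_add a 1 (n m') _).symm
        have h5 : 1 + n m' = n m' + 1 := by omega
        rw [← h5] at *
        rw [h4]
        congr 1
        have hlt := wzn_lt_succ f lam a x m'
        rw [← hn] at hlt
        omega
  -- finish
  set M := c.support.sup id + 1 with hMdef
  have hcM : c M = 0 := by
    apply Finsupp.notMem_support_iff.mp
    intro hmem
    have := Finset.le_sup (f := id) hmem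
    simp only [id] at this
    omega
  have hzero : wzbp a 1 (n M) = 0 := by rw [← hcval M, hcM]
  refine ⟨n M + 1, ?_⟩
  rw [wz_range_prod]
  have h1 : n M + 1 = 1 + n M := by omega
  rw [h1]
  have h2 : wzbp a 0 (1 + n M) = wzbp a 0 1 * wzbp a (0 + 1) (n M) := wzbp_add a 0 1 (n M)
  simp only [Nat.zero_add] at h2
  rw [h2, hzero, mul_zero]

/-- Ware–Zelmanowitz: if `f` is an endomorphism of a free module `F = R^(Λ)` lying in the
Jacobson radical of `End(F)`, then the family `{π_λ(Im f)}` of left ideals is left vanishing. -/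
theorem stmt4 {R : Type*} [Ring R] {Λ : Type*}
    (f : Module.End R (Λ →₀ R))
    (hf : f ∈ (⊥ : Ideal (Module.End R (Λ →₀ R))).jacobson)
    (lam : ℕ → Λ) (hlam : Function.Injective lam)
    (a : ℕ → R)
    (ha : ∀ i, a i ∈ (LinearMap.range f).map (Finsupp.lapply (lam i))) :
    ∃ n : ℕ, ((List.range n).map a).prod = 0 := by
  classical
  have hx : ∀ i, ∃ u : Λ →₀ R, f u (lam i) = a i := by
    intro i
    obtain ⟨y, hy, hya⟩ := Submodule.mem_map.mp (ha i)
    obtain ⟨u, hu⟩ := LinearMap.mem_range.mp hy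
    refine ⟨u, ?_⟩
    rw [hu]
    simpa using hya
  choose x hax using hx
  exact wz_master f hf lam hlam a x hax
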